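/- Let Λ be an n-bounded locally finite partially ordered set (every N_1(s) = {t : t ≤ s or s ≤ t} has at most n elements) and P a commutative absolute topological ring. Then GL_Λ(P) is solvable, with GL_Λ(P)^{(n)} = {1}. -/

import Mathlib

open Finset

section Stmt16Aux

variable {Λ P : Type*} [PartialOrder Λ] [LocallyFiniteOrder Λ] [DecidableEq Λ] [CommRing P]

private lemma stmt16_card_Icc_add (s t u : Λ) (hu : u ∈ Finset.Icc s t) :
    (Finset.Icc s u).card + (Finset.Icc u t).card ≤ (Finset.Icc s t).card + 1 := by
  rw [Finset.mem_Icc] at hu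
  have hsub : Finset.Icc s u ∪ Finset.Icc u t ⊆ Finset.Icc s t := by
    intro v hv
    rw [Finset.mem_union, Finset.mem_Icc, Finset.mem_Icc] at hv
    rw [Finset.mem_Icc]
    rcases hv with ⟨h1, h2⟩ | ⟨h1, h2⟩
    · exact ⟨h1, h2.trans hu.2⟩
    · exact ⟨hu.1.trans h1, h2⟩
  have hint : Finset.Icc s u ∩ Finset.Icc u t ⊆ {u} := by
    intro v hv
    rw [Finset.mem_inter, Finset.mem_Icc, Finset.mem_Icc] at hv
    rw [Finset.mem_singleton]
    exact le_antisymm hv.1.2 hv.2.1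
  calc (Finset.Icc s u).card + (Finset.Icc u t).card
      = (Finset.Icc s u ∪ Finset.Icc u t).card + (Finset.Icc s u ∩ Finset.Icc u t).card :=
        (Finset.card_union_add_card_inter _ _).symm
    _ ≤ (Finset.Icc s t).card + 1 :=
        Nat.add_le_add (Finset.card_le_card hsub)
          (le_trans (Finset.card_le_card hint) (by simp))

/-- The `k`-th congruence subgroup (as a set) of the units of the incidence algebra. -/
def stmt16_GSet (k : ℕ) : Set (IncidenceAlgebra P Λ)ˣ :=
  {A | ∀ s t : Λ, (Finset.Icc s t).card ≤ k →
    (A : IncidenceAlgebra P Λ) s t = (1 : IncidenceAlgebra P Λ) s t}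

private lemma stmt16_mul_apply_of_left (k : ℕ) (A B : IncidenceAlgebra P Λ)
    (hA : ∀ s t : Λ, (Finset.Icc s t).card ≤ k → A s t = (1 : IncidenceAlgebra P Λ) s t)
    (s t : Λ) (hst : (Finset.Icc s t).card ≤ k) : (A * B) s t = B s t := by
  rw [IncidenceAlgebra.mul_apply]
  by_cases h : s ≤ t
  · have hsum : ∑ x ∈ Finset.Icc s t, A s x * B x t = A s s * B s t := by
      refine Finset.sum_eq_single s (fun x hx hxs => ?_) (fun hs => ?_)
      · have hx' := Finset.mem_Icc.1 hx
        have hc : (Finset.Icc s x).card ≤ k :=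
          le_trans (Finset.card_le_card (Finset.Icc_subset_Icc_right hx'.2)) hst
        have h0 : A s x = 0 := by
          have := hA s x hc
          rwa [IncidenceAlgebra.one_apply, if_neg (Ne.symm hxs)] at this
        rw [h0, zero_mul]
      · exact absurd (Finset.mem_Icc.2 ⟨le_refl s, h⟩) hs
    have h1 : A s s = 1 := by
      have hc : (Finset.Icc s s).card ≤ k := by
        refine le_trans (Finset.card_le_card ?_) hst
        exact Finset.Icc_subset_Icc_right h
      have := hA s s hc
      rwa [IncidenceAlgebra.one_apply, if_pos rfl] at this
    rw [hsum, h1, one_mul]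
  · rw [Finset.Icc_eq_empty h, Finset.sum_empty,
      IncidenceAlgebra.apply_eq_zero_of_not_le h B]

private lemma stmt16_gset_mul {k : ℕ} {A B : (IncidenceAlgebra P Λ)ˣ}
    (hA : A ∈ stmt16_GSet k) (hB : B ∈ stmt16_GSet k) : A * B ∈ stmt16_GSet k := by
  intro s t hst
  rw [Units.val_mul, stmt16_mul_apply_of_left k _ _ hA s t hst]
  exact hB s t hst

private lemma stmt16_gset_inv {k : ℕ} {A : (IncidenceAlgebra P Λ)ˣ}
    (hA : A ∈ stmt16_GSet k) : A⁻¹ ∈ stmt16_GSet k := by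
  intro s t hst
  rw [← stmt16_mul_apply_of_left k (A : IncidenceAlgebra P Λ) _ hA s t hst, Units.mul_inv]

/-- The `k`-th congruence subgroup of the units of the incidence algebra. -/
def stmt16_Gsub (k : ℕ) : Subgroup (IncidenceAlgebra P Λ)ˣ where
  carrier := stmt16_GSet k
  mul_mem' := stmt16_gset_mul
  one_mem' := fun s t _ => by rw [Units.val_one]
  inv_mem' := stmt16_gset_inv

private lemma stmt16_gset_anti {j k : ℕ} (h : j ≤ k) :
    (stmt16_GSet k : Set (IncidenceAlgebra P Λ)ˣ) ⊆ stmt16_GSet j :=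
  fun _ hA s t hst => hA s t (hst.trans h)

private lemma stmt16_mul_cong_right {m : ℕ} {X Y : IncidenceAlgebra P Λ}
    (h : ∀ s t : Λ, (Finset.Icc s t).card ≤ m → X s t = Y s t)
    (Z : IncidenceAlgebra P Λ) (s t : Λ) (hst : (Finset.Icc s t).card ≤ m) :
    (X * Z) s t = (Y * Z) s t := by
  rw [IncidenceAlgebra.mul_apply, IncidenceAlgebra.mul_apply]
  refine Finset.sum_congr rfl fun x hx => ?_
  rw [h s x (le_trans (Finset.card_le_card
    (Finset.Icc_subset_Icc_right (Finset.mem_Icc.1 hx).2)) hst)]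

private lemma stmt16_prod_vanish {j k : ℕ} (x y : IncidenceAlgebra P Λ)
    (hx : ∀ u v : Λ, (Finset.Icc u v).card ≤ j → x u v = 0)
    (hy : ∀ u v : Λ, (Finset.Icc u v).card ≤ k → y u v = 0)
    (s t : Λ) (hst : (Finset.Icc s t).card ≤ j + k) : (x * y) s t = 0 := by
  rw [IncidenceAlgebra.mul_apply]
  refine Finset.sum_eq_zero fun u hu => ?_
  by_cases hxu : (Finset.Icc s u).card ≤ j
  · rw [hx s u hxu, zero_mul]
  · have h2 : (Finset.Icc u t).card ≤ k := by
      have := stmt16_card_Icc_add s t u hu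
      omega
    rw [hy u t h2, mul_zero]

private lemma stmt16_mul_comm_upto {j k : ℕ} {A B : (IncidenceAlgebra P Λ)ˣ}
    (hA : A ∈ stmt16_GSet j) (hB : B ∈ stmt16_GSet k) (s t : Λ)
    (hst : (Finset.Icc s t).card ≤ j + k) :
    ((A : IncidenceAlgebra P Λ) * B) s t = ((B : IncidenceAlgebra P Λ) * A) s t := by
  set a : IncidenceAlgebra P Λ := (A : IncidenceAlgebra P Λ) - 1 with ha
  set b : IncidenceAlgebra P Λ := (B : IncidenceAlgebra P Λ) - 1 with hb
  have ha0 : ∀ u v : Λ, (Finset.Icc u v).card ≤ j → a u v = 0 := fun u v h => by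
    rw [ha, IncidenceAlgebra.sub_apply, hA u v h, sub_self]
  have hb0 : ∀ u v : Λ, (Finset.Icc u v).card ≤ k → b u v = 0 := fun u v h => by
    rw [hb, IncidenceAlgebra.sub_apply, hB u v h, sub_self]
  have hAB : (A : IncidenceAlgebra P Λ) * B = 1 + a + b + a * b := by
    rw [ha, hb]; noncomm_ring
  have hBA : (B : IncidenceAlgebra P Λ) * A = 1 + a + b + b * a := by
    rw [ha, hb]; noncomm_ring
  rw [hAB, hBA]
  simp only [IncidenceAlgebra.add_apply]
  rw [stmt16_prod_vanish a b ha0 hb0 s t hst,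
    stmt16_prod_vanish b a hb0 ha0 s t (by omega)]

private lemma stmt16_comm_mem_gset {j k : ℕ} {A B : (IncidenceAlgebra P Λ)ˣ}
    (hA : A ∈ stmt16_GSet j) (hB : B ∈ stmt16_GSet k) :
    A * B * A⁻¹ * B⁻¹ ∈ stmt16_GSet (j + k) := by
  intro s t hst
  have h1 : A * B * A⁻¹ * B⁻¹ = (A * B) * (B * A)⁻¹ := by group
  have hXY : ∀ u v : Λ, (Finset.Icc u v).card ≤ j + k →
      ((A * B : (IncidenceAlgebra P Λ)ˣ) : IncidenceAlgebra P Λ) u v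
      = ((B * A : (IncidenceAlgebra P Λ)ˣ) : IncidenceAlgebra P Λ) u v := by
    intro u v huv
    rw [Units.val_mul, Units.val_mul]
    exact stmt16_mul_comm_upto hA hB u v huv
  calc ((A * B * A⁻¹ * B⁻¹ : (IncidenceAlgebra P Λ)ˣ) : IncidenceAlgebra P Λ) s t
      = (((A * B : (IncidenceAlgebra P Λ)ˣ) : IncidenceAlgebra P Λ)
          * (((B * A)⁻¹ : (IncidenceAlgebra P Λ)ˣ) : IncidenceAlgebra P Λ)) s t := by
        rw [h1, Units.val_mul]
    _ = (((B * A : (IncidenceAlgebra P Λ)ˣ) : IncidenceAlgebra P Λ)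
          * (((B * A)⁻¹ : (IncidenceAlgebra P Λ)ˣ) : IncidenceAlgebra P Λ)) s t :=
        stmt16_mul_cong_right hXY _ s t hst
    _ = (1 : IncidenceAlgebra P Λ) s t := by rw [← Units.val_mul, mul_inv_cancel, Units.val_one]

private lemma stmt16_comm_mem_gset_one (A B : (IncidenceAlgebra P Λ)ˣ) :
    A * B * A⁻¹ * B⁻¹ ∈ stmt16_GSet 1 := by
  intro s t hst
  by_cases hstle : s ≤ t
  · have hseq : s = t := by
      by_contra hne
      have hsub : ({s, t} : Finset Λ) ⊆ Finset.Icc s t := by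
        intro v hv
        rw [Finset.mem_insert, Finset.mem_singleton] at hv
        rcases hv with rfl | rfl
        · exact Finset.mem_Icc.2 ⟨le_refl _, hstle⟩
        · exact Finset.mem_Icc.2 ⟨hstle, le_refl _⟩
      have h2 : ({s, t} : Finset Λ).card = 2 := Finset.card_pair hne
      have := Finset.card_le_card hsub
      omega
    subst hseq
    have diag : ∀ X Y : (IncidenceAlgebra P Λ)ˣ,
        ((X * Y : (IncidenceAlgebra P Λ)ˣ) : IncidenceAlgebra P Λ) s s
        = ((X : IncidenceAlgebra P Λ) s s) * ((Y : IncidenceAlgebra P Λ) s s) := by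
      intro X Y
      rw [Units.val_mul, IncidenceAlgebra.mul_apply, Finset.Icc_self, Finset.sum_singleton]
    have hinv : ∀ X : (IncidenceAlgebra P Λ)ˣ,
        ((X : IncidenceAlgebra P Λ) s s)
          * (((X⁻¹ : (IncidenceAlgebra P Λ)ˣ) : IncidenceAlgebra P Λ) s s) = 1 := by
      intro X
      rw [← diag X X⁻¹]
      simp
    calc ((A * B * A⁻¹ * B⁻¹ : (IncidenceAlgebra P Λ)ˣ) : IncidenceAlgebra P Λ) s s
        = (A : IncidenceAlgebra P Λ) s s * (B : IncidenceAlgebra P Λ) s s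
          * ((A⁻¹ : (IncidenceAlgebra P Λ)ˣ) : IncidenceAlgebra P Λ) s s
          * ((B⁻¹ : (IncidenceAlgebra P Λ)ˣ) : IncidenceAlgebra P Λ) s s := by
          rw [diag, diag, diag]
      _ = ((A : IncidenceAlgebra P Λ) s s
            * ((A⁻¹ : (IncidenceAlgebra P Λ)ˣ) : IncidenceAlgebra P Λ) s s)
          * ((B : IncidenceAlgebra P Λ) s s
            * ((B⁻¹ : (IncidenceAlgebra P Λ)ˣ) : IncidenceAlgebra P Λ) s s) := by ring
      _ = (1 : IncidenceAlgebra P Λ) s s := by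
          rw [hinv A, hinv B, one_mul, IncidenceAlgebra.one_apply, if_pos rfl]
  · rw [IncidenceAlgebra.apply_eq_zero_of_not_le hstle, IncidenceAlgebra.one_apply,
      if_neg fun h : s = t => hstle (le_of_eq h)]

end Stmt16Aux

/-- Let `Λ` be an `n`-bounded locally finite partially ordered set (every
`N₁(s) = {t : t ≤ s ∨ s ≤ t}` has at most `n` elements) and `P` a commutative
absolute topological ring.  Then `GL_Λ(P)` is solvable: the `n`-th term of its closed
derived series is trivial. -/
theorem stmt16 {Λ P : Type*} [PartialOrder Λ] [LocallyFiniteOrder Λ] [DecidableEq Λ]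
    [CommRing P] [τP : TopologicalSpace P] [IsTopologicalRing P] [T2Space P]
    (habs : @ContinuousInv Pˣ
      (TopologicalSpace.induced (Units.val : Pˣ → P) τP) inferInstance)
    (n : ℕ)
    (hbound : ∀ s : Λ, {t : Λ | t ≤ s ∨ s ≤ t}.Finite ∧
      {t : Λ | t ≤ s ∨ s ≤ t}.ncard ≤ n)
    (D : ℕ → Set (IncidenceAlgebra P Λ)ˣ)
    (hD0 : D 0 = Set.univ)
    (hDsucc : ∀ k, D (k + 1) =
      @closure (IncidenceAlgebra P Λ)ˣ
        (TopologicalSpace.induced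
          (fun A : (IncidenceAlgebra P Λ)ˣ => ⇑(A : IncidenceAlgebra P Λ))
          Pi.topologicalSpace)
        ↑(Subgroup.closure
          {x : (IncidenceAlgebra P Λ)ˣ |
            ∃ a ∈ D k, ∃ b ∈ D k, x = a * b * a⁻¹ * b⁻¹})) :
    D n = {1} := by
  classical
  letI T : TopologicalSpace (IncidenceAlgebra P Λ)ˣ :=
    TopologicalSpace.induced
      (fun A : (IncidenceAlgebra P Λ)ˣ => ⇑(A : IncidenceAlgebra P Λ)) Pi.topologicalSpace
  have hclosed : ∀ m : ℕ, IsClosed (stmt16_GSet (P := P) (Λ := Λ) m) := by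
    intro m
    have heq : stmt16_GSet (P := P) (Λ := Λ) m =
        ⋂ (s : Λ) (t : Λ) (_ : (Finset.Icc s t).card ≤ m),
          {A : (IncidenceAlgebra P Λ)ˣ |
            (A : IncidenceAlgebra P Λ) s t = (1 : IncidenceAlgebra P Λ) s t} := by
      ext A
      simp [stmt16_GSet, Set.mem_iInter]
    rw [heq]
    refine isClosed_iInter fun s => isClosed_iInter fun t => isClosed_iInter fun _ => ?_
    have hcont : Continuous fun A : (IncidenceAlgebra P Λ)ˣ => (A : IncidenceAlgebra P Λ) s t :=
      (continuous_apply t).comp ((continuous_apply s).comp continuous_induced_dom)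
    exact isClosed_eq hcont continuous_const
  have hsubset : ∀ k : ℕ, D k ⊆ stmt16_GSet k := by
    intro k
    induction k with
    | zero =>
        rw [hD0]
        intro A _ s t hst
        have hne : ¬ s ≤ t := by
          intro h
          have hmem : s ∈ Finset.Icc s t := Finset.mem_Icc.2 ⟨le_refl _, h⟩
          have := Finset.card_pos.2 ⟨s, hmem⟩
          omega
        rw [IncidenceAlgebra.apply_eq_zero_of_not_le hne, IncidenceAlgebra.one_apply,
          if_neg fun h : s = t => hne (le_of_eq h)]
    | succ k ih =>
        rw [hDsucc k]
        have hS : {x : (IncidenceAlgebra P Λ)ˣ |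
            ∃ a ∈ D k, ∃ b ∈ D k, x = a * b * a⁻¹ * b⁻¹} ⊆ stmt16_GSet (k + 1) := by
          rintro x ⟨a, ha, b, hb, rfl⟩
          rcases Nat.eq_zero_or_pos k with rfl | hk
          · exact stmt16_comm_mem_gset_one a b
          · exact stmt16_comm_mem_gset (ih ha) (stmt16_gset_anti hk (ih hb))
        have hle : Subgroup.closure {x : (IncidenceAlgebra P Λ)ˣ |
            ∃ a ∈ D k, ∃ b ∈ D k, x = a * b * a⁻¹ * b⁻¹} ≤ stmt16_Gsub (k + 1) :=
          (Subgroup.closure_le _).2 hS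
        exact closure_minimal (fun x hx => hle hx) (hclosed (k + 1))
  have hcard : ∀ s t : Λ, (Finset.Icc s t).card ≤ n := by
    intro s t
    by_cases h : s ≤ t
    · have hfin := (hbound s).1
      have hsub : (Finset.Icc s t : Set Λ) ⊆ {t' : Λ | t' ≤ s ∨ s ≤ t'} := by
        intro v hv
        rw [Finset.coe_Icc, Set.mem_Icc] at hv
        exact Or.inr hv.1
      have hle := Set.ncard_le_ncard hsub hfin
      rw [Set.ncard_coe_finset] at hle
      exact hle.trans (hbound s).2
    · rw [Finset.Icc_eq_empty h]; simp
  have hone : ∀ A ∈ stmt16_GSet (P := P) (Λ := Λ) n, A = 1 := by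
    intro A hA
    apply Units.ext
    rw [Units.val_one]
    ext s t _
    have := hA s t (hcard s t)
    simpa using this
  have h1mem : (1 : (IncidenceAlgebra P Λ)ˣ) ∈ D n := by
    cases n with
    | zero => rw [hD0]; trivial
    | succ k =>
        rw [hDsucc k]
        exact subset_closure (Subgroup.one_mem _)
  exact Set.eq_singleton_iff_unique_mem.2 ⟨h1mem, fun x hx => hone x (hsubset n hx)⟩
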